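/- Assume inf_{x,y∈S} κ(x,y) > 0. If the equation f = 1 − e^{−T_κ[f]} has a μ-a.e. finite measurable solution f with sup_{x∈S} f(x) < 0, then r*_κ > 1; that is, there exist z > 1 and a μ-a.e. finite measurable function g ≥ 1 with g = z·e^{T_κ[g−1]} μ-a.e. -/
import Mathlib


open MeasureTheory Filter Topology
open scoped ENNReal

/-- Extended exponential on `ℝ≥0∞`, with `eexp ⊤ = ⊤`. -/
noncomputable def eexp (t : ℝ≥0∞) : ℝ≥0∞ :=
  if t = ⊤ then ⊤ else ENNReal.ofReal (Real.exp t.toReal)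

/-- The nonlinear operator `Φ_{z,κ}[g](x) = z·exp(T_κ[g-1](x))`. -/
noncomputable def Phi {S : Type*} [MeasurableSpace S] (μ : Measure S)
    (κ : S → S → ℝ) (z : ℝ) (f : S → ℝ≥0∞) : S → ℝ≥0∞ :=
  fun x => ENNReal.ofReal z * eexp (∫⁻ y, ENNReal.ofReal (κ x y) * (f y - 1) ∂μ)

lemma eexp_mono : Monotone eexp := by
  intro a b hab
  unfold eexp
  rcases eq_or_ne b ⊤ with hb | hb
  · simp [hb]
  · have ha : a ≠ ⊤ := fun h => hb (top_le_iff.mp (h ▸ hab))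
    rw [if_neg ha, if_neg hb]
    exact ENNReal.ofReal_le_ofReal (Real.exp_le_exp.mpr (ENNReal.toReal_mono hb hab))

lemma eexp_measurable : Measurable eexp := eexp_mono.measurable

lemma one_le_eexp (t : ℝ≥0∞) : 1 ≤ eexp t := by
  unfold eexp
  split
  · exact le_top
  · exact ENNReal.one_le_ofReal.mpr (Real.one_le_exp ENNReal.toReal_nonneg)

lemma eexp_ofReal {a : ℝ} (ha : 0 ≤ a) :
    eexp (ENNReal.ofReal a) = ENNReal.ofReal (Real.exp a) := by
  unfold eexp
  rw [if_neg ENNReal.ofReal_ne_top, ENNReal.toReal_ofReal ha]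

lemma eexp_iSup {t : ℕ → ℝ≥0∞} (hm : Monotone t) (ht : (⨆ n, t n) ≠ ⊤) :
    eexp (⨆ n, t n) = ⨆ n, eexp (t n) := by
  have htn : ∀ n, t n ≠ ⊤ := fun n => ne_top_of_le_ne_top ht (le_iSup t n)
  have h1 : Tendsto t atTop (𝓝 (⨆ n, t n)) := tendsto_atTop_iSup hm
  have h2 : Tendsto (fun n => (t n).toReal) atTop (𝓝 ((⨆ n, t n)).toReal) :=
    (ENNReal.tendsto_toReal ht).comp h1
  have h3 : Tendsto (fun n => eexp (t n)) atTop (𝓝 (eexp (⨆ n, t n))) := by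
    have heq : (fun n => eexp (t n)) =
        fun n => ENNReal.ofReal (Real.exp (t n).toReal) := by
      funext n
      unfold eexp
      rw [if_neg (htn n)]
    have heq2 : eexp (⨆ n, t n) = ENNReal.ofReal (Real.exp ((⨆ n, t n)).toReal) := by
      unfold eexp; rw [if_neg ht]
    rw [heq, heq2]
    exact (ENNReal.continuous_ofReal.tendsto _).comp ((Real.continuous_exp.tendsto _).comp h2)
  exact (iSup_eq_of_tendsto (fun a b hab => eexp_mono (hm hab)) h3).symm

lemma phi_mono {S : Type*} [MeasurableSpace S] (μ : Measure S)
    (κ : S → S → ℝ) (z : ℝ) {g g' : S → ℝ≥0∞} (h : ∀ y, g y ≤ g' y) (x : S) :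
    Phi μ κ z g x ≤ Phi μ κ z g' x :=
  mul_le_mul_right
    (eexp_mono (lintegral_mono fun y => mul_le_mul_right (tsub_le_tsub_right (h y) 1) _)) _

lemma one_le_phi {S : Type*} [MeasurableSpace S] (μ : Measure S)
    (κ : S → S → ℝ) {z : ℝ} (hz : 1 ≤ z) (g : S → ℝ≥0∞) (x : S) :
    1 ≤ Phi μ κ z g x := by
  calc (1 : ℝ≥0∞) = 1 * 1 := (one_mul 1).symm
    _ ≤ _ := mul_le_mul' (ENNReal.one_le_ofReal.mpr hz) (one_le_eexp _)

lemma phi_measurable {S : Type*} [MeasurableSpace S] (μ : Measure S) [SFinite μ]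
    (κ : S → S → ℝ) (hκmeas : Measurable (Function.uncurry κ)) (z : ℝ)
    {g : S → ℝ≥0∞} (hg : Measurable g) : Measurable (Phi μ κ z g) := by
  have hinner : Measurable fun x => ∫⁻ y, ENNReal.ofReal (κ x y) * (g y - 1) ∂μ := by
    apply Measurable.lintegral_prod_right'
      (f := fun p : S × S => ENNReal.ofReal (κ p.1 p.2) * (g p.2 - 1))
    exact (hκmeas.ennreal_ofReal).mul ((hg.comp measurable_snd).sub measurable_const)
  exact measurable_const.mul (eexp_measurable.comp hinner)

/-- The monotone iteration scheme for `Phi`, started from the constant function 1. -/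
noncomputable def phiIter {S : Type*} [MeasurableSpace S] (μ : Measure S)
    (κ : S → S → ℝ) (z : ℝ) : ℕ → S → ℝ≥0∞
  | 0 => fun _ => 1
  | n + 1 => Phi μ κ z (phiIter μ κ z n)

theorem stmt11 {S : Type*} [MeasurableSpace S] [MetricSpace S] [BorelSpace S]
    [TopologicalSpace.SeparableSpace S]
    (μ : Measure S) [IsProbabilityMeasure μ]
    (κ : S → S → ℝ) (hκmeas : Measurable (Function.uncurry κ))
    (hκsymm : ∀ x y, κ x y = κ y x)
    (hκinf : ∃ b : ℝ, 0 < b ∧ ∀ x y, b ≤ κ x y)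
    (f : S → ℝ) (hfmeas : Measurable f)
    (hfint : ∀ x, Integrable (fun y => κ x y * f y) μ)
    (hfsup : ∃ s : ℝ, s < 0 ∧ ∀ x, f x ≤ s)
    (hfeq : ∀ x, f x = 1 - Real.exp (-∫ y, κ x y * f y ∂μ)) :
    ∃ z : ℝ, 1 < z ∧ ∃ g : S → ℝ≥0∞, Measurable g ∧ (∀ x, 1 ≤ g x) ∧
      (∀ᵐ x ∂μ, g x ≠ ⊤) ∧ (∀ᵐ x ∂μ, Phi μ κ z g x = g x) := by
  obtain ⟨b, hb, hbκ⟩ := hκinf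
  obtain ⟨s, hs, hfs⟩ := hfsup
  set ε : ℝ := -s with hεdef
  have hε0 : 0 < ε := by simp [hεdef]; linarith
  set h : S → ℝ := fun x => -f x with hhdef
  have hhε : ∀ x, ε ≤ h x := fun x => by
    simp only [hhdef, hεdef]; linarith [hfs x]
  have hh0 : ∀ x, 0 < h x := fun x => lt_of_lt_of_le hε0 (hhε x)
  have hκ0 : ∀ x y, 0 ≤ κ x y := fun x y => le_trans hb.le (hbκ x y)
  set A : S → ℝ := fun x => ∫ y, κ x y * h y ∂μ with hAdef
  have hAint : ∀ x, Integrable (fun y => κ x y * h y) μ := by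
    intro x
    have e : (fun y => κ x y * h y) = fun y => -(κ x y * f y) :=
      funext fun y => by simp [hhdef, mul_neg]
    rw [e]; exact (hfint x).neg
  have hexpA : ∀ x, Real.exp (A x) = 1 + h x := by
    intro x
    have hAf : A x = -∫ y, κ x y * f y ∂μ := by
      simp [hAdef, hhdef, mul_neg, integral_neg]
    rw [hAf]
    have := hfeq x
    simp only [hhdef]
    linarith
  have hA0 : ∀ x, 0 ≤ A x := fun x =>
    Real.one_le_exp_iff.mp (by rw [hexpA x]; linarith [hh0 x])
  -- the constant z
  set q : ℝ := Real.sqrt (1 + ε) with hqdef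
  have hq0 : 0 < q := by rw [hqdef]; exact Real.sqrt_pos.mpr (by linarith)
  have hq2 : q ^ 2 = 1 + ε := by rw [hqdef]; exact Real.sq_sqrt (by linarith)
  set z : ℝ := (1 + ε / 2) / q with hzdef
  have hz1 : 1 < z := by
    rw [hzdef, lt_div_iff₀ hq0, one_mul]
    exact (Real.sqrt_lt' (by linarith)).mpr (by nlinarith)
  have hz0 : 0 ≤ z := by linarith
  -- the supersolution G
  set G : S → ℝ≥0∞ := fun x => ENNReal.ofReal (1 + h x / 2) with hGdef
  clear_value z q A h ε
  have hG1 : ∀ x, 1 ≤ G x := fun x =>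
    ENNReal.one_le_ofReal.mpr (by linarith [hh0 x])
  have hGtop : ∀ x, G x ≠ ⊤ := fun x => ENNReal.ofReal_ne_top
  -- the value of the inner lintegral at G
  have hIG : ∀ x, (∫⁻ y, ENNReal.ofReal (κ x y) * (G y - 1) ∂μ)
      = ENNReal.ofReal (A x / 2) := by
    intro x
    have hint : Integrable (fun y => κ x y * (h y / 2)) μ := by
      simpa [mul_div_assoc] using (hAint x).div_const 2
    have h1 : (∫⁻ y, ENNReal.ofReal (κ x y) * (G y - 1) ∂μ)
        = ∫⁻ y, ENNReal.ofReal (κ x y * (h y / 2)) ∂μ := by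
      apply lintegral_congr
      intro y
      have hGy : G y - 1 = ENNReal.ofReal (h y / 2) := by
        rw [hGdef]
        simp only
        rw [← ENNReal.ofReal_one, ← ENNReal.ofReal_sub _ zero_le_one]
        norm_num
      rw [hGy, ← ENNReal.ofReal_mul (hκ0 x y)]
    rw [h1, ← ofReal_integral_eq_lintegral_ofReal hint
      (Eventually.of_forall fun y => mul_nonneg (hκ0 x y) (by linarith [hh0 y]))]
    congr 1
    rw [show A x / 2 = (∫ y, κ x y * h y ∂μ) / 2 by rw [hAdef], ← integral_div]
    exact integral_congr_ae (Eventually.of_forall fun y => by ring)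
  -- supersolution property
  have hsuper : ∀ x, Phi μ κ z G x ≤ G x := by
    intro x
    show ENNReal.ofReal z * eexp (∫⁻ y, ENNReal.ofReal (κ x y) * (G y - 1) ∂μ) ≤ G x
    rw [hIG x, eexp_ofReal (by linarith [hA0 x]),
      ← ENNReal.ofReal_mul hz0]
    apply ENNReal.ofReal_le_ofReal
    set e : ℝ := Real.exp (A x / 2) with hedef
    have he0 : 0 < e := Real.exp_pos _
    have he2 : e ^ 2 = 1 + h x := by
      rw [hedef, sq, ← Real.exp_add]
      rw [show A x / 2 + A x / 2 = A x by ring]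
      exact hexpA x
    rw [hzdef, div_mul_eq_mul_div, div_le_iff₀ hq0]
    have hab2 : ((1 + ε / 2) * e) ^ 2 ≤ ((1 + h x / 2) * q) ^ 2 := by
      have key : (1 + ε / 2) ^ 2 * (1 + h x) ≤ (1 + h x / 2) ^ 2 * (1 + ε) := by
        nlinarith [mul_nonneg (sub_nonneg.mpr (hhε x))
          (add_nonneg (add_nonneg hε0.le (hh0 x).le) (mul_nonneg hε0.le (hh0 x).le))]
      calc ((1 + ε / 2) * e) ^ 2 = (1 + ε / 2) ^ 2 * (1 + h x) := by
            rw [mul_pow, he2]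
        _ ≤ (1 + h x / 2) ^ 2 * (1 + ε) := key
        _ = ((1 + h x / 2) * q) ^ 2 := by rw [mul_pow, hq2]
    exact (abs_le_of_sq_le_sq' hab2
      (mul_nonneg (by linarith [hh0 x]) hq0.le)).2
  -- properties of the iteration
  have hmeas : ∀ n, Measurable (phiIter μ κ z n) := by
    intro n
    induction n with
    | zero => exact measurable_const
    | succ n ih => exact phi_measurable μ κ hκmeas z ih
  have hstep : ∀ n x, phiIter μ κ z n x ≤ phiIter μ κ z (n + 1) x := by
    intro n
    induction n with
    | zero => exact fun x => one_le_phi μ κ hz1.le _ x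
    | succ n ih => exact fun x => phi_mono μ κ z ih x
  have hmonoF : Monotone (phiIter μ κ z) :=
    monotone_nat_of_le_succ (fun n x => hstep n x)
  have hleG : ∀ n x, phiIter μ κ z n x ≤ G x := by
    intro n
    induction n with
    | zero => exact fun x => hG1 x
    | succ n ih => exact fun x => le_trans (phi_mono μ κ z ih x) (hsuper x)
  -- the limit
  set g : S → ℝ≥0∞ := fun x => ⨆ n, phiIter μ κ z n x with hgdef
  have hgmeas : Measurable g := Measurable.iSup (fun n => hmeas n)
  have hg1 : ∀ x, 1 ≤ g x := fun x => le_iSup (fun n => phiIter μ κ z n x) 0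
  have hgG : ∀ x, g x ≤ G x := fun x => iSup_le fun n => hleG n x
  have hgtop : ∀ x, g x ≠ ⊤ := fun x => ne_top_of_le_ne_top (hGtop x) (hgG x)
  -- fixed point
  have hfix : ∀ x, Phi μ κ z g x = g x := by
    intro x
    set I : ℕ → ℝ≥0∞ := fun n => ∫⁻ y, ENNReal.ofReal (κ x y) * (phiIter μ κ z n y - 1) ∂μ
      with hIdef
    have hImono : Monotone I := fun n m hnm =>
      lintegral_mono fun y => mul_le_mul_right (tsub_le_tsub_right (hmonoF hnm y) 1) _
    have hIlim : (∫⁻ y, ENNReal.ofReal (κ x y) * (g y - 1) ∂μ) = ⨆ n, I n := by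
      have hmeasn : ∀ n, Measurable
          fun y => ENNReal.ofReal (κ x y) * (phiIter μ κ z n y - 1) := fun n =>
        ((hκmeas.comp (measurable_prodMk_left (x := x))).ennreal_ofReal).mul
          ((hmeas n).sub measurable_const)
      rw [hIdef, ← lintegral_iSup hmeasn
        (fun n m hnm y => mul_le_mul_right (tsub_le_tsub_right (hmonoF hnm y) 1) _)]
      apply lintegral_congr
      intro y
      rw [hgdef]
      simp only
      rw [ENNReal.iSup_sub, ENNReal.mul_iSup]
    have hIfin : (⨆ n, I n) ≠ ⊤ := by
      apply ne_top_of_le_ne_top (ENNReal.ofReal_ne_top (r := A x / 2))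
      apply iSup_le
      intro n
      rw [← hIG x]
      exact lintegral_mono fun y =>
        mul_le_mul_right (tsub_le_tsub_right (hleG n y) 1) _
    show ENNReal.ofReal z * eexp (∫⁻ y, ENNReal.ofReal (κ x y) * (g y - 1) ∂μ) = g x
    rw [hIlim, eexp_iSup hImono hIfin, ENNReal.mul_iSup]
    have hID : ∀ n, ENNReal.ofReal z * eexp (I n) = phiIter μ κ z (n + 1) x :=
      fun n => rfl
    apply le_antisymm
    · exact iSup_le fun n => (hID n) ▸ le_iSup (fun n => phiIter μ κ z n x) (n + 1)
    · exact iSup_le fun n =>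
        le_trans (hstep n x) ((hID n).symm ▸ le_iSup (fun m => ENNReal.ofReal z * eexp (I m)) n)
  exact ⟨z, hz1, g, hgmeas, hg1,
    Eventually.of_forall hgtop, Eventually.of_forall hfix⟩
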